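/- Let a, b ∈ ℝ with b ≥ 2. Then every non-real root z of Φ(a, b, ·) satisfies |z| > √(b(b−2)). -/

import Mathlib

open Complex

/-- The Kummer confluent hypergeometric function `Φ(a, b, z)`. -/
noncomputable def kummerPhi (a b z : ℂ) : ℂ :=
  ∑' k : ℕ, ((ascPochhammer ℂ k).eval a / (ascPochhammer ℂ k).eval b) * z ^ k /
    (Nat.factorial k)

namespace KummerAux

/-- Taylor coefficients of the Kummer function. -/
noncomputable def kc (a b : ℝ) (k : ℕ) : ℂ :=
  (ascPochhammer ℂ k).eval (a : ℂ) / ((ascPochhammer ℂ k).eval (b : ℂ) * (Nat.factorial k : ℂ))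

/-- Coefficients along the ray of direction `ω`. -/
noncomputable def kd (a b : ℝ) (ω : ℂ) (k : ℕ) : ℂ := kc a b k * ω ^ k

lemma poch_real (b : ℝ) (k : ℕ) :
    (ascPochhammer ℂ k).eval (b : ℂ) = (((ascPochhammer ℝ k).eval b : ℝ) : ℂ) := by
  induction k with
  | zero => simp
  | succ n ih =>
      rw [ascPochhammer_succ_right, ascPochhammer_succ_right]
      push_cast [Polynomial.eval_mul, Polynomial.eval_add, Polynomial.eval_X, Polynomial.eval_natCast, ih]
      ring

lemma poch_pos (b : ℝ) (hb : 2 ≤ b) (k : ℕ) : 0 < (ascPochhammer ℝ k).eval b := by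
  induction k with
  | zero => simp
  | succ n ih =>
      rw [ascPochhammer_succ_right]
      simp only [Polynomial.eval_mul, Polynomial.eval_add, Polynomial.eval_X,
        Polynomial.eval_natCast]
      have h2 : (0:ℝ) < b + n := by
        have : (0:ℝ) ≤ n := Nat.cast_nonneg n
        linarith
      exact mul_pos ih h2

lemma kc_zero (a b : ℝ) : kc a b 0 = 1 := by simp [kc]

lemma poch_ne_zero (b : ℝ) (hb : 2 ≤ b) (k : ℕ) :
    (ascPochhammer ℂ k).eval (b : ℂ) ≠ 0 := by
  rw [poch_real]
  exact_mod_cast (poch_pos b hb k).ne'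

lemma bk_ne_zero (b : ℝ) (hb : 2 ≤ b) (k : ℕ) : ((b:ℂ) + k) ≠ 0 := by
  have : ((b:ℂ) + k) = (((b + k : ℝ)) : ℂ) := by push_cast; ring
  rw [this, Ne, Complex.ofReal_eq_zero]
  have : (0:ℝ) ≤ k := Nat.cast_nonneg k
  intro hc; linarith [hc]

lemma kc_rec (a b : ℝ) (hb : 2 ≤ b) (k : ℕ) :
    kc a b (k+1) * (((b:ℂ) + k) * ((k:ℂ) + 1)) = kc a b k * ((a:ℂ) + k) := by
  have ha' : (ascPochhammer ℂ (k+1)).eval (a:ℂ)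
      = (ascPochhammer ℂ k).eval (a:ℂ) * ((a:ℂ) + k) := by
    rw [ascPochhammer_succ_right]
    simp [Polynomial.eval_mul, Polynomial.eval_add, Polynomial.eval_X, Polynomial.eval_natCast]
  have hb' : (ascPochhammer ℂ (k+1)).eval (b:ℂ)
      = (ascPochhammer ℂ k).eval (b:ℂ) * ((b:ℂ) + k) := by
    rw [ascPochhammer_succ_right]
    simp [Polynomial.eval_mul, Polynomial.eval_add, Polynomial.eval_X, Polynomial.eval_natCast]
  have hf' : ((Nat.factorial (k+1) : ℕ) : ℂ) = ((k:ℂ) + 1) * (Nat.factorial k : ℂ) := by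
    rw [Nat.factorial_succ]; push_cast; ring
  have hpb := poch_ne_zero b hb k
  have hbk := bk_ne_zero b hb k
  have hk1 : ((k:ℂ) + 1) ≠ 0 := by
    have : ((k:ℂ) + 1) = (((k+1 : ℕ)) : ℂ) := by push_cast; ring
    rw [this, Ne, Nat.cast_eq_zero]; omega
  have hfk : ((Nat.factorial k : ℕ) : ℂ) ≠ 0 := by
    rw [Ne, Nat.cast_eq_zero]; exact (Nat.factorial_ne_zero k)
  rw [kc, kc, ha', hb', hf']
  field_simp

lemma kc_norm (a b : ℝ) (hb : 2 ≤ b) (k : ℕ) :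
    ‖kc a b k‖ ≤ (1 + |a|/2) ^ k / (Nat.factorial k : ℝ) := by
  set M : ℝ := 1 + |a|/2 with hM
  have hM1 : 1 ≤ M := by have := abs_nonneg a; simp [hM]; linarith
  have hM0 : 0 < M := lt_of_lt_of_le one_pos hM1
  induction k with
  | zero => simp [kc_zero]
  | succ k ih =>
      have hrec := kc_rec a b hb k
      have hkn : (0:ℝ) ≤ k := Nat.cast_nonneg k
      have hbk : (0:ℝ) < b + k := by linarith
      have hnorm1 : ‖(((b:ℂ) + k) * ((k:ℂ) + 1))‖ = (b + k) * (k + 1) := by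
        have h1 : (((b:ℂ) + k) * ((k:ℂ) + 1)) = ((((b + k) * (k + 1) : ℝ)) : ℂ) := by
          push_cast; ring
        rw [h1, Complex.norm_real, Real.norm_eq_abs, abs_of_pos (by positivity)]
      have e1 : ‖kc a b (k+1)‖ * ((b + k) * (k + 1)) = ‖kc a b k‖ * ‖(a:ℂ) + (k:ℂ)‖ := by
        have := congrArg norm hrec
        rwa [norm_mul, hnorm1, norm_mul] at this
      have hna : ‖(a:ℂ) + (k:ℂ)‖ ≤ M * (b + k) := by
        have h2 : ‖(a:ℂ) + (k:ℂ)‖ ≤ |a| + k := by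
          calc ‖(a:ℂ) + (k:ℂ)‖ ≤ ‖(a:ℂ)‖ + ‖(k:ℂ)‖ := norm_add_le _ _
          _ = |a| + k := by rw [Complex.norm_real]; norm_num
        have h3 : |a| + k ≤ M * (b + k) := by
          have h0 := abs_nonneg a
          have h4 : |a| * 2 ≤ |a| * b := mul_le_mul_of_nonneg_left hb h0
          have h5 : 0 ≤ |a| * k := mul_nonneg h0 hkn
          simp only [hM]
          nlinarith
        linarith
      have hfk : (0:ℝ) < (Nat.factorial k : ℝ) := by
        exact_mod_cast Nat.factorial_pos k
      have hub : ‖kc a b k‖ * ‖(a:ℂ) + (k:ℂ)‖ ≤ (M ^ k / (Nat.factorial k : ℝ)) * (M * (b + k)) :=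
        mul_le_mul ih hna (norm_nonneg _) (by positivity)
      have e2 : ‖kc a b (k+1)‖ = (‖kc a b k‖ * ‖(a:ℂ) + (k:ℂ)‖) / ((b + k) * (k + 1)) := by
        field_simp at e1 ⊢
        linarith [e1]
      rw [e2]
      have e3 : (M ^ k / (Nat.factorial k : ℝ)) * (M * (b + k)) / ((b + k) * (k + 1))
          = M ^ (k+1) / (Nat.factorial (k+1) : ℝ) := by
        rw [Nat.factorial_succ]
        push_cast
        field_simp
        ring
      rw [← e3]
      gcongr

lemma kd_norm (a b : ℝ) (hb : 2 ≤ b) {ω : ℂ} (hω : ‖ω‖ = 1) (k : ℕ) :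
    ‖kd a b ω k‖ ≤ (1 + |a|/2) ^ k / (Nat.factorial k : ℝ) := by
  have h : ‖kd a b ω k‖ = ‖kc a b k‖ := by
    have hωn : ‖ω‖ = 1 := by rw [hω]
    rw [kd, norm_mul, norm_pow, hωn, one_pow, mul_one]
  rw [h]; exact kc_norm a b hb k

lemma summable_lin (x : ℝ) : Summable (fun k : ℕ => (k:ℝ) * (x ^ k / (Nat.factorial k : ℝ))) := by
  rw [← summable_nat_add_iff 1]
  apply ((Real.summable_pow_div_factorial x).mul_left x).congr
  intro n
  have h1 : ((Nat.factorial (n+1) : ℕ) : ℝ) = ((n:ℝ) + 1) * (Nat.factorial n : ℝ) := by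
    rw [Nat.factorial_succ]; push_cast; ring
  have h2 : ((n:ℝ) + 1) ≠ 0 := by positivity
  have h3 : ((Nat.factorial n : ℕ) : ℝ) ≠ 0 := by
    exact_mod_cast (Nat.factorial_ne_zero n)
  push_cast [h1]
  field_simp
  ring

lemma summable_quad (x : ℝ) : Summable (fun k : ℕ => (k:ℝ)^2 * (x ^ k / (Nat.factorial k : ℝ))) := by
  rw [← summable_nat_add_iff 1]
  apply (((summable_lin x).mul_left x).add ((Real.summable_pow_div_factorial x).mul_left x)).congr
  intro n
  have h1 : ((Nat.factorial (n+1) : ℕ) : ℝ) = ((n:ℝ) + 1) * (Nat.factorial n : ℝ) := by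
    rw [Nat.factorial_succ]; push_cast; ring
  have h2 : ((n:ℝ) + 1) ≠ 0 := by positivity
  have h3 : ((Nat.factorial n : ℕ) : ℝ) ≠ 0 := by
    exact_mod_cast (Nat.factorial_ne_zero n)
  push_cast [h1]
  field_simp
  ring

lemma summable_cube (x c0 c1 c2 : ℝ) :
    Summable (fun k : ℕ => (c2 * (k:ℝ)^2 + c1 * (k:ℝ) + c0) * (x ^ k / (Nat.factorial k : ℝ))) := by
  apply ((((summable_quad x).mul_left c2).add ((summable_lin x).mul_left c1)).add
    ((Real.summable_pow_div_factorial x).mul_left c0)).congr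
  intro n
  ring

lemma summable_of_cube_bound {f : ℕ → ℂ} (x c0 c1 c2 : ℝ)
    (hf : ∀ k, ‖f k‖ ≤ (c2 * (k:ℝ)^2 + c1 * (k:ℝ) + c0) * (x ^ k / (Nat.factorial k : ℝ))) :
    Summable f :=
  Summable.of_norm_bounded (summable_cube x c0 c1 c2) hf

section Series

variable (a b : ℝ) (ω : ℂ)

/-- `Φ(a,b,sω)` as a function of the real variable `s`. -/
noncomputable def W0 (s : ℝ) : ℂ := ∑' k : ℕ, kd a b ω k * (s:ℂ)^k

noncomputable def W1 (s : ℝ) : ℂ := ∑' k : ℕ, ((k:ℂ)+1) * kd a b ω (k+1) * (s:ℂ)^k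

noncomputable def W2 (s : ℝ) : ℂ := ∑' k : ℕ, ((k:ℂ)+1) * ((k:ℂ)+2) * kd a b ω (k+2) * (s:ℂ)^k

variable {a b ω}
variable (hb : 2 ≤ b) (hω : ‖ω‖ = 1)
include hb hω

lemma fact_cast_succ (k : ℕ) :
    ((Nat.factorial (k+1) : ℕ) : ℝ) = ((k:ℝ) + 1) * (Nat.factorial k : ℝ) := by
  rw [Nat.factorial_succ]; push_cast; ring

omit hb hω in
lemma norm_k_add_one (k : ℕ) : ‖((k:ℂ) + 1)‖ = (k:ℝ) + 1 := by
  have h : ((k:ℂ) + 1) = (((k+1:ℕ)) : ℂ) := by push_cast; ring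
  rw [h, Complex.norm_natCast]; push_cast; ring

omit hb hω in
lemma norm_k_add_two (k : ℕ) : ‖((k:ℂ) + 2)‖ = (k:ℝ) + 2 := by
  have h : ((k:ℂ) + 2) = (((k+2:ℕ)) : ℂ) := by push_cast; ring
  rw [h, Complex.norm_natCast]; push_cast; ring

lemma S0 (s : ℝ) : Summable (fun k : ℕ => kd a b ω k * (s:ℂ)^k) := by
  set M : ℝ := 1 + |a|/2 with hM
  apply summable_of_cube_bound (M * |s|) 1 0 0
  intro k
  have h1 : ‖kd a b ω k * (s:ℂ)^k‖ ≤ (M^k / (Nat.factorial k : ℝ)) * |s|^k := by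
    rw [norm_mul, norm_pow, Complex.norm_real, Real.norm_eq_abs]
    exact mul_le_mul_of_nonneg_right (kd_norm a b hb hω k) (by positivity)
  calc ‖kd a b ω k * (s:ℂ)^k‖ ≤ (M^k / (Nat.factorial k : ℝ)) * |s|^k := h1
  _ = (0 * (k:ℝ)^2 + 0 * (k:ℝ) + 1) * ((M*|s|)^k / (Nat.factorial k : ℝ)) := by
      rw [mul_pow]; ring

lemma S0' (s : ℝ) : Summable (fun k : ℕ => (k:ℂ) * kd a b ω k * ω * (s:ℂ)^k) := by
  set M : ℝ := 1 + |a|/2 with hM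
  apply summable_of_cube_bound (M * |s|) 0 1 0
  intro k
  have hωn : ‖ω‖ = 1 := by rw [hω]
  have h1 : ‖(k:ℂ) * kd a b ω k * ω * (s:ℂ)^k‖
      = (k:ℝ) * ‖kd a b ω k‖ * |s|^k := by
    rw [norm_mul, norm_mul, norm_mul, norm_pow, Complex.norm_real, Real.norm_eq_abs, hωn,
      Complex.norm_natCast, mul_one]
  rw [h1]
  have h2 : (k:ℝ) * ‖kd a b ω k‖ * |s|^k ≤ (k:ℝ) * (M^k / (Nat.factorial k : ℝ)) * |s|^k := by
    have := kd_norm a b hb hω k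
    have hk : (0:ℝ) ≤ k := Nat.cast_nonneg k
    have hs : (0:ℝ) ≤ |s|^k := by positivity
    nlinarith [mul_le_mul_of_nonneg_left this hk]
  calc (k:ℝ) * ‖kd a b ω k‖ * |s|^k ≤ (k:ℝ) * (M^k / (Nat.factorial k : ℝ)) * |s|^k := h2
  _ = (0 * (k:ℝ)^2 + 1 * (k:ℝ) + 0) * ((M*|s|)^k / (Nat.factorial k : ℝ)) := by
      rw [mul_pow]; ring

lemma kd_succ_norm (k : ℕ) :
    ‖kd a b ω (k+1)‖ ≤ (1 + |a|/2) * ((1 + |a|/2)^k / (Nat.factorial (k+1) : ℝ)) := by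
  have := kd_norm a b hb hω (k+1)
  calc ‖kd a b ω (k+1)‖ ≤ (1 + |a|/2)^(k+1) / (Nat.factorial (k+1) : ℝ) := this
  _ = (1 + |a|/2) * ((1 + |a|/2)^k / (Nat.factorial (k+1) : ℝ)) := by
      rw [pow_succ]; ring

lemma S1 (s : ℝ) : Summable (fun k : ℕ => ((k:ℂ)+1) * kd a b ω (k+1) * (s:ℂ)^k) := by
  set M : ℝ := 1 + |a|/2 with hM
  have hM0 : (0:ℝ) < M := by positivity
  apply summable_of_cube_bound (M * |s|) M 0 0
  intro k
  have h1 : ‖((k:ℂ)+1) * kd a b ω (k+1) * (s:ℂ)^k‖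
      = ((k:ℝ)+1) * ‖kd a b ω (k+1)‖ * |s|^k := by
    simp only [norm_mul, norm_pow, Complex.norm_real, Real.norm_eq_abs, norm_k_add_one]
  rw [h1]
  have h2 : ((k:ℝ)+1) * ‖kd a b ω (k+1)‖ ≤ ((k:ℝ)+1) * (M^(k+1) / (Nat.factorial (k+1) : ℝ)) :=
    mul_le_mul_of_nonneg_left (kd_norm a b hb hω (k+1)) (by positivity)
  have h3 : ((k:ℝ)+1) * (M^(k+1) / (Nat.factorial (k+1) : ℝ)) = M * (M^k / (Nat.factorial k : ℝ)) := by
    rw [fact_cast_succ hb hω, pow_succ]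
    have : ((k:ℝ) + 1) ≠ 0 := by positivity
    have h4 : ((Nat.factorial k : ℕ) : ℝ) ≠ 0 := by exact_mod_cast (Nat.factorial_ne_zero k)
    field_simp
  have hs : (0:ℝ) ≤ |s|^k := by positivity
  calc ((k:ℝ)+1) * ‖kd a b ω (k+1)‖ * |s|^k
      ≤ M * (M^k / (Nat.factorial k : ℝ)) * |s|^k := by
        rw [← h3]; exact mul_le_mul_of_nonneg_right h2 hs
  _ = (0 * (k:ℝ)^2 + 0 * (k:ℝ) + M) * ((M*|s|)^k / (Nat.factorial k : ℝ)) := by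
      rw [mul_pow]; ring

lemma S1' (s : ℝ) : Summable (fun k : ℕ => (k:ℂ) * ((k:ℂ)+1) * kd a b ω (k+1) * (s:ℂ)^k) := by
  set M : ℝ := 1 + |a|/2 with hM
  have hM0 : (0:ℝ) < M := by positivity
  apply summable_of_cube_bound (M * |s|) 0 M 0
  intro k
  have h1 : ‖(k:ℂ) * ((k:ℂ)+1) * kd a b ω (k+1) * (s:ℂ)^k‖
      = (k:ℝ) * (((k:ℝ)+1) * ‖kd a b ω (k+1)‖) * |s|^k := by
    simp only [norm_mul, norm_pow, Complex.norm_real, Real.norm_eq_abs, norm_k_add_one,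
      Complex.norm_natCast]
    ring
  rw [h1]
  have h2 : ((k:ℝ)+1) * ‖kd a b ω (k+1)‖ ≤ M * (M^k / (Nat.factorial k : ℝ)) := by
    have h2a : ((k:ℝ)+1) * ‖kd a b ω (k+1)‖ ≤ ((k:ℝ)+1) * (M^(k+1) / (Nat.factorial (k+1) : ℝ)) :=
      mul_le_mul_of_nonneg_left (kd_norm a b hb hω (k+1)) (by positivity)
    have h3 : ((k:ℝ)+1) * (M^(k+1) / (Nat.factorial (k+1) : ℝ)) = M * (M^k / (Nat.factorial k : ℝ)) := by
      rw [fact_cast_succ hb hω, pow_succ]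
      have : ((k:ℝ) + 1) ≠ 0 := by positivity
      have h4 : ((Nat.factorial k : ℕ) : ℝ) ≠ 0 := by exact_mod_cast (Nat.factorial_ne_zero k)
      field_simp
    linarith
  have hk : (0:ℝ) ≤ k := Nat.cast_nonneg k
  have hs : (0:ℝ) ≤ |s|^k := by positivity
  calc (k:ℝ) * (((k:ℝ)+1) * ‖kd a b ω (k+1)‖) * |s|^k
      ≤ (k:ℝ) * (M * (M^k / (Nat.factorial k : ℝ))) * |s|^k := by
        apply mul_le_mul_of_nonneg_right _ hs
        exact mul_le_mul_of_nonneg_left h2 hk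
  _ = (0 * (k:ℝ)^2 + M * (k:ℝ) + 0) * ((M*|s|)^k / (Nat.factorial k : ℝ)) := by
      rw [mul_pow]; ring

lemma S2 (s : ℝ) : Summable (fun k : ℕ => ((k:ℂ)+1) * ((k:ℂ)+2) * kd a b ω (k+2) * (s:ℂ)^k) := by
  set M : ℝ := 1 + |a|/2 with hM
  have hM0 : (0:ℝ) < M := by positivity
  apply summable_of_cube_bound (M * |s|) (M^2) 0 0
  intro k
  have h1 : ‖((k:ℂ)+1) * ((k:ℂ)+2) * kd a b ω (k+2) * (s:ℂ)^k‖
      = ((k:ℝ)+1) * (((k:ℝ)+2) * ‖kd a b ω (k+2)‖) * |s|^k := by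
    simp only [norm_mul, norm_pow, Complex.norm_real, Real.norm_eq_abs, norm_k_add_one,
      norm_k_add_two]
    ring
  rw [h1]
  have h2 : ((k:ℝ)+1) * (((k:ℝ)+2) * ‖kd a b ω (k+2)‖) ≤ M^2 * (M^k / (Nat.factorial k : ℝ)) := by
    have hkd := kd_norm a b hb hω (k+2)
    have h2a : ((k:ℝ)+1) * (((k:ℝ)+2) * ‖kd a b ω (k+2)‖)
        ≤ ((k:ℝ)+1) * (((k:ℝ)+2) * (M^(k+2) / (Nat.factorial (k+2) : ℝ))) := by
      apply mul_le_mul_of_nonneg_left _ (by positivity)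
      exact mul_le_mul_of_nonneg_left hkd (by positivity)
    have h3 : ((k:ℝ)+1) * (((k:ℝ)+2) * (M^(k+2) / (Nat.factorial (k+2) : ℝ)))
        = M^2 * (M^k / (Nat.factorial k : ℝ)) := by
      have e1 : ((Nat.factorial (k+2) : ℕ) : ℝ)
          = ((k:ℝ) + 2) * (((k:ℝ) + 1) * (Nat.factorial k : ℝ)) := by
        rw [Nat.factorial_succ, Nat.factorial_succ]; push_cast; ring
      rw [e1, pow_add]
      have h4 : ((k:ℝ) + 1) ≠ 0 := by positivity
      have h5 : ((k:ℝ) + 2) ≠ 0 := by positivity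
      have h6 : ((Nat.factorial k : ℕ) : ℝ) ≠ 0 := by exact_mod_cast (Nat.factorial_ne_zero k)
      field_simp
    linarith
  have hs : (0:ℝ) ≤ |s|^k := by positivity
  calc ((k:ℝ)+1) * (((k:ℝ)+2) * ‖kd a b ω (k+2)‖) * |s|^k
      ≤ M^2 * (M^k / (Nat.factorial k : ℝ)) * |s|^k := mul_le_mul_of_nonneg_right h2 hs
  _ = (0 * (k:ℝ)^2 + 0 * (k:ℝ) + M^2) * ((M*|s|)^k / (Nat.factorial k : ℝ)) := by
      rw [mul_pow]; ring

omit hb hω in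
lemma tsum_shift {F : ℕ → ℂ} (hF : Summable F) (h0 : F 0 = 0) :
    ∑' k : ℕ, F (k+1) = ∑' k : ℕ, F k := by
  rw [Summable.tsum_eq_zero_add hF, h0, zero_add]

lemma Sder0 (s : ℝ) : Summable (fun k : ℕ => kd a b ω k * ((k:ℂ) * (s:ℂ)^(k-1))) := by
  set M : ℝ := 1 + |a|/2 with hM
  have hM0 : (0:ℝ) < M := by positivity
  set R : ℝ := |s| + 1 with hR
  have hs0 := abs_nonneg s
  have hR0 : (0:ℝ) < R := by simp only [hR]; linarith
  have hsR : |s| ≤ R := by simp only [hR]; linarith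
  apply summable_of_cube_bound (M * R) 0 (1/R) 0
  intro k
  have hnorm : ‖kd a b ω k * ((k:ℂ) * (s:ℂ)^(k-1))‖
      = ‖kd a b ω k‖ * ((k:ℝ) * |s|^(k-1)) := by
    simp only [norm_mul, norm_pow, Complex.norm_natCast, Complex.norm_real, Real.norm_eq_abs]
  rw [hnorm]
  cases k with
  | zero => simp
  | succ m =>
      have hkd := kd_norm a b hb hω (m+1)
      have hyR : |s|^m ≤ R^m := pow_le_pow_left₀ hs0 hsR m
      have hfle : ‖kd a b ω (m+1)‖ * (((m+1:ℕ):ℝ) * |s|^((m+1)-1))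
          ≤ (M^(m+1) / (Nat.factorial (m+1) : ℝ)) * (((m:ℝ)+1) * R^m) := by
        have h1 : (((m+1:ℕ):ℝ) * |s|^((m+1)-1)) = ((m:ℝ)+1) * |s|^m := by
          push_cast; rfl
        rw [h1]
        have h2 : ((m:ℝ)+1) * |s|^m ≤ ((m:ℝ)+1) * R^m :=
          mul_le_mul_of_nonneg_left hyR (by positivity)
        have h3 : (0:ℝ) ≤ ((m:ℝ)+1) * |s|^m := by positivity
        exact mul_le_mul hkd h2 h3 (by positivity)
      refine le_trans hfle (le_of_eq ?_)
      have h4 : ((Nat.factorial (m+1) : ℕ) : ℝ) ≠ 0 := by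
        exact_mod_cast (Nat.factorial_ne_zero (m+1))
      rw [mul_pow]
      push_cast
      field_simp
      ring

lemma Sder1 (s : ℝ) :
    Summable (fun k : ℕ => ((k:ℂ)+1) * kd a b ω (k+1) * ((k:ℂ) * (s:ℂ)^(k-1))) := by
  set M : ℝ := 1 + |a|/2 with hM
  have hM0 : (0:ℝ) < M := by positivity
  set R : ℝ := |s| + 1 with hR
  have hs0 := abs_nonneg s
  have hR0 : (0:ℝ) < R := by simp only [hR]; linarith
  have hsR : |s| ≤ R := by simp only [hR]; linarith
  apply summable_of_cube_bound (M * R) 0 (M/R) 0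
  intro k
  have hnorm : ‖((k:ℂ)+1) * kd a b ω (k+1) * ((k:ℂ) * (s:ℂ)^(k-1))‖
      = ((k:ℝ)+1) * ‖kd a b ω (k+1)‖ * ((k:ℝ) * |s|^(k-1)) := by
    simp only [norm_mul, norm_pow, Complex.norm_natCast, Complex.norm_real, Real.norm_eq_abs,
      norm_k_add_one]
  rw [hnorm]
  cases k with
  | zero => simp
  | succ m =>
      have hkd := kd_norm a b hb hω (m+2)
      have hyR : |s|^m ≤ R^m := pow_le_pow_left₀ hs0 hsR m
      have key : ((m:ℝ)+1+1) * ‖kd a b ω (m+2)‖ ≤ ((m:ℝ)+2) * (M^(m+2) / (Nat.factorial (m+2) : ℝ)) := by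
        have : ((m:ℝ)+1+1) = ((m:ℝ)+2) := by ring
        rw [this]
        exact mul_le_mul_of_nonneg_left hkd (by positivity)
      have hfle : ((m:ℝ)+1+1) * ‖kd a b ω (m+1+1)‖ * ((((m+1:ℕ)):ℝ) * |s|^((m+1)-1))
          ≤ (((m:ℝ)+2) * (M^(m+2) / (Nat.factorial (m+2) : ℝ))) * (((m:ℝ)+1) * R^m) := by
        have h1 : ((((m+1:ℕ)):ℝ) * |s|^((m+1)-1)) = ((m:ℝ)+1) * |s|^m := by
          push_cast; rfl
        rw [h1]
        have h2 : ((m:ℝ)+1) * |s|^m ≤ ((m:ℝ)+1) * R^m :=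
          mul_le_mul_of_nonneg_left hyR (by positivity)
        have h3 : (0:ℝ) ≤ ((m:ℝ)+1) * |s|^m := by positivity
        exact mul_le_mul key h2 h3 (by positivity)
      refine le_trans (by exact_mod_cast hfle) (le_of_eq ?_)
      have e1 : ((Nat.factorial (m+2) : ℕ) : ℝ)
          = ((m:ℝ) + 2) * (((m:ℝ) + 1) * (Nat.factorial m : ℝ)) := by
        rw [Nat.factorial_succ, Nat.factorial_succ]; push_cast; ring
      have h4 : ((Nat.factorial m : ℕ) : ℝ) ≠ 0 := by
        exact_mod_cast (Nat.factorial_ne_zero m)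
      have e2 : ((Nat.factorial (m+1) : ℕ) : ℝ) = ((m:ℝ) + 1) * (Nat.factorial m : ℝ) := by
        rw [Nat.factorial_succ]; push_cast; ring
      rw [e1, mul_pow]
      push_cast [e2]
      field_simp
      ring

lemma hasDerivAt_W0 (s : ℝ) : HasDerivAt (W0 a b ω) (W1 a b ω s) s := by
  set M : ℝ := 1 + |a|/2 with hM
  have hM0 : (0:ℝ) < M := by positivity
  set R : ℝ := |s| + 1 with hR
  have hs0 := abs_nonneg s
  have hR0 : (0:ℝ) < R := by simp only [hR]; linarith
  have hmem : s ∈ Set.Ioo (-R) R := by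
    constructor
    · simp only [hR]; cases abs_cases s with
      | inl h => linarith [h.1]
      | inr h => linarith [h.1]
    · simp only [hR]; cases abs_cases s with
      | inl h => linarith [h.1]
      | inr h => linarith [h.1]
  have h0mem : (0:ℝ) ∈ Set.Ioo (-R) R := by
    constructor <;> simp only [hR] <;> linarith
  have hu : Summable (fun k : ℕ =>
      (0 * (k:ℝ)^2 + (1/R) * (k:ℝ) + 0) * ((M*R)^k / (Nat.factorial k : ℝ))) :=
    summable_cube _ _ _ _
  have hder : HasDerivAt (fun t : ℝ => ∑' k : ℕ, kd a b ω k * (t:ℂ)^k)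
      (∑' k : ℕ, kd a b ω k * ((k:ℂ) * (s:ℂ)^(k-1))) s := by
    apply hasDerivAt_tsum_of_isPreconnected hu isOpen_Ioo isPreconnected_Ioo
      (fun n y _ => ((hasDerivAt_pow n ((y:ℝ):ℂ)).comp_ofReal).const_mul (kd a b ω n))
      ?_ h0mem ?_ hmem
    · intro n y hy
      have hyR : |y| ≤ R := le_of_lt (abs_lt.mpr ⟨hy.1, hy.2⟩)
      have hy0 := abs_nonneg y
      have hnorm : ‖kd a b ω n * ((n:ℂ) * (y:ℂ)^(n-1))‖
          = ‖kd a b ω n‖ * ((n:ℝ) * |y|^(n-1)) := by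
        simp only [norm_mul, norm_pow, Complex.norm_natCast, Complex.norm_real, Real.norm_eq_abs]
      rw [hnorm]
      cases n with
      | zero => simp
      | succ m =>
          have hkd := kd_norm a b hb hω (m+1)
          have hyRm : |y|^m ≤ R^m := pow_le_pow_left₀ hy0 hyR m
          have hfle : ‖kd a b ω (m+1)‖ * (((m+1:ℕ):ℝ) * |y|^((m+1)-1))
              ≤ (M^(m+1) / (Nat.factorial (m+1) : ℝ)) * (((m:ℝ)+1) * R^m) := by
            have h1 : (((m+1:ℕ):ℝ) * |y|^((m+1)-1)) = ((m:ℝ)+1) * |y|^m := by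
              push_cast; rfl
            rw [h1]
            have h2 : ((m:ℝ)+1) * |y|^m ≤ ((m:ℝ)+1) * R^m :=
              mul_le_mul_of_nonneg_left hyRm (by positivity)
            exact mul_le_mul hkd h2 (by positivity) (by positivity)
          refine le_trans hfle (le_of_eq ?_)
          have h4 : ((Nat.factorial (m+1) : ℕ) : ℝ) ≠ 0 := by
            exact_mod_cast (Nat.factorial_ne_zero (m+1))
          rw [mul_pow]
          push_cast
          field_simp
          ring
    · exact S0 hb hω 0
  have hshift : ∑' k : ℕ, kd a b ω k * ((k:ℂ) * (s:ℂ)^(k-1)) = W1 a b ω s := by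
    rw [Summable.tsum_eq_zero_add (Sder0 hb hω s)]
    simp only [Nat.cast_zero, zero_mul, mul_zero, zero_add]
    rw [W1]
    apply tsum_congr
    intro k
    have h1 : (k + 1 - 1 : ℕ) = k := rfl
    rw [h1]
    push_cast
    ring
  rw [hshift] at hder
  exact hder

lemma hasDerivAt_W1 (s : ℝ) : HasDerivAt (W1 a b ω) (W2 a b ω s) s := by
  set M : ℝ := 1 + |a|/2 with hM
  have hM0 : (0:ℝ) < M := by positivity
  set R : ℝ := |s| + 1 with hR
  have hs0 := abs_nonneg s
  have hR0 : (0:ℝ) < R := by simp only [hR]; linarith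
  have hmem : s ∈ Set.Ioo (-R) R := by
    constructor <;> · simp only [hR]; cases abs_cases s with
      | inl h => linarith [h.1]
      | inr h => linarith [h.1]
  have h0mem : (0:ℝ) ∈ Set.Ioo (-R) R := by
    constructor <;> simp only [hR] <;> linarith
  have hu : Summable (fun k : ℕ =>
      (0 * (k:ℝ)^2 + (M/R) * (k:ℝ) + 0) * ((M*R)^k / (Nat.factorial k : ℝ))) :=
    summable_cube _ _ _ _
  have hder : HasDerivAt (fun t : ℝ => ∑' k : ℕ, ((k:ℂ)+1) * kd a b ω (k+1) * (t:ℂ)^k)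
      (∑' k : ℕ, ((k:ℂ)+1) * kd a b ω (k+1) * ((k:ℂ) * (s:ℂ)^(k-1))) s := by
    apply hasDerivAt_tsum_of_isPreconnected hu isOpen_Ioo isPreconnected_Ioo
      (fun n y _ => ((hasDerivAt_pow n ((y:ℝ):ℂ)).comp_ofReal).const_mul
        (((n:ℂ)+1) * kd a b ω (n+1)))
      ?_ h0mem ?_ hmem
    · intro n y hy
      have hyR : |y| ≤ R := le_of_lt (abs_lt.mpr ⟨hy.1, hy.2⟩)
      have hy0 := abs_nonneg y
      have hnorm : ‖((n:ℂ)+1) * kd a b ω (n+1) * ((n:ℂ) * (y:ℂ)^(n-1))‖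
          = ((n:ℝ)+1) * ‖kd a b ω (n+1)‖ * ((n:ℝ) * |y|^(n-1)) := by
        simp only [norm_mul, norm_pow, Complex.norm_natCast, Complex.norm_real,
          Real.norm_eq_abs, norm_k_add_one]
      rw [hnorm]
      cases n with
      | zero => simp
      | succ m =>
          have hkd := kd_norm a b hb hω (m+2)
          have hyRm : |y|^m ≤ R^m := pow_le_pow_left₀ hy0 hyR m
          have key : ((m:ℝ)+1+1) * ‖kd a b ω (m+1+1)‖
              ≤ ((m:ℝ)+2) * (M^(m+2) / (Nat.factorial (m+2) : ℝ)) := by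
            have he : ((m:ℝ)+1+1) = ((m:ℝ)+2) := by ring
            rw [he]
            exact mul_le_mul_of_nonneg_left hkd (by positivity)
          have hfle : ((m:ℝ)+1+1) * ‖kd a b ω (m+1+1)‖ * ((((m+1:ℕ)):ℝ) * |y|^((m+1)-1))
              ≤ (((m:ℝ)+2) * (M^(m+2) / (Nat.factorial (m+2) : ℝ))) * (((m:ℝ)+1) * R^m) := by
            have h1 : ((((m+1:ℕ)):ℝ) * |y|^((m+1)-1)) = ((m:ℝ)+1) * |y|^m := by
              push_cast; rfl
            rw [h1]
            have h2 : ((m:ℝ)+1) * |y|^m ≤ ((m:ℝ)+1) * R^m :=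
              mul_le_mul_of_nonneg_left hyRm (by positivity)
            exact mul_le_mul key h2 (by positivity) (by positivity)
          refine le_trans (by exact_mod_cast hfle) (le_of_eq ?_)
          have e1 : ((Nat.factorial (m+2) : ℕ) : ℝ)
              = ((m:ℝ) + 2) * (((m:ℝ) + 1) * (Nat.factorial m : ℝ)) := by
            rw [Nat.factorial_succ, Nat.factorial_succ]; push_cast; ring
          have h4 : ((Nat.factorial m : ℕ) : ℝ) ≠ 0 := by
            exact_mod_cast (Nat.factorial_ne_zero m)
          have e2 : ((Nat.factorial (m+1) : ℕ) : ℝ) = ((m:ℝ) + 1) * (Nat.factorial m : ℝ) := by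
            rw [Nat.factorial_succ]; push_cast; ring
          rw [e1, mul_pow]
          push_cast [e2]
          field_simp
          ring
    · exact S1 hb hω 0
  have hshift : ∑' k : ℕ, ((k:ℂ)+1) * kd a b ω (k+1) * ((k:ℂ) * (s:ℂ)^(k-1)) = W2 a b ω s := by
    rw [Summable.tsum_eq_zero_add (Sder1 hb hω s)]
    simp only [Nat.cast_zero, zero_mul, mul_zero, zero_add]
    rw [W2]
    apply tsum_congr
    intro k
    have h1 : (k + 1 - 1 : ℕ) = k := rfl
    rw [h1]
    push_cast
    ring
  rw [hshift] at hder
  exact hder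

lemma W_ode (s : ℝ) :
    (s:ℂ) * W2 a b ω s + ((b:ℂ) - (s:ℂ)*ω) * W1 a b ω s - (a:ℂ)*ω*W0 a b ω s = 0 := by
  have key : ∀ k : ℕ, ((k:ℂ)+1) * ((k:ℂ)+(b:ℂ)) * kd a b ω (k+1)
      = ((k:ℂ)+(a:ℂ)) * ω * kd a b ω k := by
    intro k
    have h := kc_rec a b hb k
    simp only [kd]
    linear_combination (ω^(k+1)) * h
  have e2 : (s:ℂ) * W2 a b ω s
      = ∑' k : ℕ, (k:ℂ) * ((k:ℂ)+1) * kd a b ω (k+1) * (s:ℂ)^k := by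
    rw [W2, ← tsum_mul_left]
    have h1 : ∀ k : ℕ, (s:ℂ) * (((k:ℂ)+1) * ((k:ℂ)+2) * kd a b ω (k+2) * (s:ℂ)^k)
        = (fun k : ℕ => (k:ℂ) * ((k:ℂ)+1) * kd a b ω (k+1) * (s:ℂ)^k) (k+1) := by
      intro k; push_cast; ring
    rw [tsum_congr h1]
    exact tsum_shift (S1' hb hω s) (by simp)
  have e1 : ((s:ℂ)*ω) * W1 a b ω s
      = ∑' k : ℕ, (k:ℂ) * kd a b ω k * ω * (s:ℂ)^k := by
    rw [W1, ← tsum_mul_left]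
    have h1 : ∀ k : ℕ, ((s:ℂ)*ω) * (((k:ℂ)+1) * kd a b ω (k+1) * (s:ℂ)^k)
        = (fun k : ℕ => (k:ℂ) * kd a b ω k * ω * (s:ℂ)^k) (k+1) := by
      intro k; push_cast; ring
    rw [tsum_congr h1]
    exact tsum_shift (S0' hb hω s) (by simp)
  have eb : (b:ℂ) * W1 a b ω s
      = ∑' k : ℕ, (b:ℂ) * (((k:ℂ)+1) * kd a b ω (k+1) * (s:ℂ)^k) := by
    rw [W1, ← tsum_mul_left]
  have ea : ((a:ℂ)*ω) * W0 a b ω s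
      = ∑' k : ℕ, ((a:ℂ)*ω) * (kd a b ω k * (s:ℂ)^k) := by
    rw [W0, ← tsum_mul_left]
  have hsb : Summable (fun k : ℕ => (b:ℂ) * (((k:ℂ)+1) * kd a b ω (k+1) * (s:ℂ)^k)) :=
    (S1 hb hω s).mul_left _
  have hsa : Summable (fun k : ℕ => ((a:ℂ)*ω) * (kd a b ω k * (s:ℂ)^k)) :=
    (S0 hb hω s).mul_left _
  have hstep : (s:ℂ) * W2 a b ω s + ((b:ℂ) - (s:ℂ)*ω) * W1 a b ω s - (a:ℂ)*ω*W0 a b ω s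
      = (∑' k : ℕ, (k:ℂ) * ((k:ℂ)+1) * kd a b ω (k+1) * (s:ℂ)^k)
        + (∑' k : ℕ, (b:ℂ) * (((k:ℂ)+1) * kd a b ω (k+1) * (s:ℂ)^k))
        - ((∑' k : ℕ, (k:ℂ) * kd a b ω k * ω * (s:ℂ)^k)
        + (∑' k : ℕ, ((a:ℂ)*ω) * (kd a b ω k * (s:ℂ)^k))) := by
    rw [← e2, ← e1, ← eb, ← ea]; ring
  rw [hstep]
  rw [← Summable.tsum_add (S1' hb hω s) hsb, ← Summable.tsum_add (S0' hb hω s) hsa,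
    ← Summable.tsum_sub ((S1' hb hω s).add hsb) ((S0' hb hω s).add hsa)]
  have : ∀ k : ℕ, ((k:ℂ) * ((k:ℂ)+1) * kd a b ω (k+1) * (s:ℂ)^k
      + (b:ℂ) * (((k:ℂ)+1) * kd a b ω (k+1) * (s:ℂ)^k))
      - ((k:ℂ) * kd a b ω k * ω * (s:ℂ)^k + ((a:ℂ)*ω) * (kd a b ω k * (s:ℂ)^k)) = 0 := by
    intro k
    linear_combination ((s:ℂ)^k) * key k
  rw [tsum_congr this]
  exact tsum_zero

omit hb hω in
lemma W0_zero : W0 a b ω 0 = 1 := by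
  rw [W0, tsum_eq_single 0]
  · simp [kd, kc_zero]
  · intro k hk
    cases k with
    | zero => exact absurd rfl hk
    | succ m => simp

omit hb hω in
lemma kummerPhi_eq (s : ℝ) : kummerPhi (a:ℂ) (b:ℂ) ((s:ℂ) * ω) = W0 a b ω s := by
  rw [kummerPhi, W0]
  apply tsum_congr
  intro k
  rw [kd, kc, mul_pow]
  ring

end Series

/-- `exp(-ωs/2)`. -/
noncomputable def EE (ω : ℂ) (s : ℝ) : ℂ := Complex.exp (-(ω/2) * (s:ℂ))

noncomputable def V (a b : ℝ) (ω : ℂ) (s : ℝ) : ℂ := EE ω s * W0 a b ω s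

noncomputable def V1 (a b : ℝ) (ω : ℂ) (s : ℝ) : ℂ :=
  EE ω s * (W1 a b ω s - (ω/2) * W0 a b ω s)

noncomputable def V2 (a b : ℝ) (ω : ℂ) (s : ℝ) : ℂ :=
  EE ω s * (W2 a b ω s - ω * W1 a b ω s + (ω^2/4) * W0 a b ω s)

noncomputable def Gf (a b : ℝ) (ω : ℂ) (s : ℝ) : ℂ :=
  ((b:ℂ)/2) * V a b ω s + (s:ℂ) * V1 a b ω s

noncomputable def Uf (a b : ℝ) (ω : ℂ) (s : ℝ) : ℂ := ((s ^ (b/2) : ℝ) : ℂ) * V a b ω s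

noncomputable def U1f (a b : ℝ) (ω : ℂ) (s : ℝ) : ℂ :=
  (((b/2) * s ^ (b/2-1) : ℝ) : ℂ) * V a b ω s + ((s ^ (b/2) : ℝ) : ℂ) * V1 a b ω s

noncomputable def U2f (a b : ℝ) (ω : ℂ) (s : ℝ) : ℂ :=
  (((b/2)*(b/2-1) * s ^ (b/2-2) : ℝ) : ℂ) * V a b ω s
    + ((b * s ^ (b/2-1) : ℝ) : ℂ) * V1 a b ω s + ((s ^ (b/2) : ℝ) : ℂ) * V2 a b ω s

noncomputable def ggf (a b : ℝ) (ω : ℂ) (s : ℝ) : ℂ :=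
  ((s ^ (b-1) : ℝ) : ℂ) * (Gf a b ω s * (starRingEnd ℂ) (V a b ω s))

noncomputable def phif (a b : ℝ) (ω : ℂ) (s : ℝ) : ℝ :=
  s ^ (b-2) * Complex.normSq (V a b ω s)

noncomputable def chif (a b : ℝ) (ω : ℂ) (s : ℝ) : ℝ :=
  s ^ (b-2) * Complex.normSq (Gf a b ω s)

section Layer2

variable {a b : ℝ} {ω : ℂ}
variable (hb : 2 ≤ b) (hω : ‖ω‖ = 1)
include hb hω

omit hb hω in
lemma hasDerivAt_EE (ω : ℂ) (s : ℝ) : HasDerivAt (EE ω) (-(ω/2) * EE ω s) s := by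
  have h1 : HasDerivAt (fun z : ℂ => Complex.exp (-(ω/2) * z))
      (Complex.exp (-(ω/2) * ((s:ℝ):ℂ)) * (-(ω/2) * 1)) ((s:ℝ):ℂ) :=
    (Complex.hasDerivAt_exp (-(ω/2) * ((s:ℝ):ℂ))).comp ((s:ℝ):ℂ)
      ((hasDerivAt_id ((s:ℝ):ℂ)).const_mul (-(ω/2)))
  have h2 := h1.comp_ofReal
  have h3 : Complex.exp (-(ω/2) * ((s:ℝ):ℂ)) * (-(ω/2) * 1) = -(ω/2) * EE ω s := by
    rw [EE]; ring
  rw [h3] at h2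
  exact h2

lemma hasDerivAt_V (s : ℝ) : HasDerivAt (V a b ω) (V1 a b ω s) s := by
  have h := (hasDerivAt_EE ω s).mul (hasDerivAt_W0 (a := a) hb hω s)
  have h3 : -(ω/2) * EE ω s * W0 a b ω s + EE ω s * W1 a b ω s = V1 a b ω s := by
    simp only [V1]; ring
  rw [h3] at h
  exact h

lemma hasDerivAt_V1 (s : ℝ) : HasDerivAt (V1 a b ω) (V2 a b ω s) s := by
  have hin : HasDerivAt (fun t => W1 a b ω t - (ω/2) * W0 a b ω t)
      (W2 a b ω s - (ω/2) * W1 a b ω s) s :=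
    (hasDerivAt_W1 (a := a) hb hω s).sub ((hasDerivAt_W0 (a := a) hb hω s).const_mul (ω/2))
  have h := (hasDerivAt_EE ω s).mul hin
  have h3 : -(ω/2) * EE ω s * (W1 a b ω s - (ω/2) * W0 a b ω s)
      + EE ω s * (W2 a b ω s - (ω/2) * W1 a b ω s) = V2 a b ω s := by
    simp only [V2, V1]; ring
  rw [h3] at h
  exact h

lemma V_cont : Continuous (V a b ω) :=
  continuous_iff_continuousAt.mpr fun s => (hasDerivAt_V (a := a) hb hω s).continuousAt

lemma V1_cont : Continuous (V1 a b ω) :=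
  continuous_iff_continuousAt.mpr fun s => (hasDerivAt_V1 (a := a) hb hω s).continuousAt

lemma G_cont : Continuous (Gf a b ω) := by
  apply Continuous.add
  · exact continuous_const.mul (V_cont hb hω)
  · exact Complex.continuous_ofReal.mul (V1_cont hb hω)

omit hb hω in
lemma rpow_contOn (p : ℝ) (hp : 0 ≤ p) (c d : ℝ) :
    ContinuousOn (fun s : ℝ => s ^ p) (Set.Icc c d) := by
  intro x _
  exact (Real.continuousAt_rpow_const x p (Or.inr hp)).continuousWithinAt

-- rpow arithmetic helpers
omit hb hω in
lemma rpow_shift {s : ℝ} (hs : 0 < s) (p : ℝ) : s ^ (p + 1) = s ^ p * s := by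
  rw [Real.rpow_add hs, Real.rpow_one]

lemma hasDerivAt_U {s : ℝ} (hs : 0 < s) : HasDerivAt (Uf a b ω) (U1f a b ω s) s := by
  have hr : HasDerivAt (fun t : ℝ => t ^ (b/2)) ((b/2) * s ^ (b/2-1)) s :=
    Real.hasDerivAt_rpow_const (Or.inl hs.ne')
  have hrC : HasDerivAt (fun t : ℝ => ((t ^ (b/2) : ℝ) : ℂ)) (((b/2) * s ^ (b/2-1) : ℝ) : ℂ) s :=
    hr.ofReal_comp
  have h := hrC.mul (hasDerivAt_V (a := a) hb hω s)
  have h3 : (((b/2) * s ^ (b/2-1) : ℝ) : ℂ) * V a b ω s + ((s ^ (b/2) : ℝ):ℂ) * V1 a b ω s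
      = U1f a b ω s := by rw [U1f]
  rw [h3] at h
  exact h

lemma hasDerivAt_U1 {s : ℝ} (hs : 0 < s) : HasDerivAt (U1f a b ω) (U2f a b ω s) s := by
  have hr1 : HasDerivAt (fun t : ℝ => t ^ (b/2-1)) ((b/2-1) * s ^ (b/2-1-1)) s :=
    Real.hasDerivAt_rpow_const (Or.inl hs.ne')
  have hr1' : HasDerivAt (fun t : ℝ => (b/2) * t ^ (b/2-1)) ((b/2) * ((b/2-1) * s ^ (b/2-1-1))) s :=
    hr1.const_mul (b/2)
  have hr1C : HasDerivAt (fun t : ℝ => (((b/2) * t ^ (b/2-1) : ℝ) : ℂ))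
      (((b/2) * ((b/2-1) * s ^ (b/2-1-1)) : ℝ) : ℂ) s := hr1'.ofReal_comp
  have hr2 : HasDerivAt (fun t : ℝ => t ^ (b/2)) ((b/2) * s ^ (b/2-1)) s :=
    Real.hasDerivAt_rpow_const (Or.inl hs.ne')
  have hr2C : HasDerivAt (fun t : ℝ => ((t ^ (b/2) : ℝ) : ℂ)) (((b/2) * s ^ (b/2-1) : ℝ) : ℂ) s :=
    hr2.ofReal_comp
  have h := (hr1C.mul (hasDerivAt_V (a := a) hb hω s)).add (hr2C.mul (hasDerivAt_V1 (a := a) hb hω s))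
  have hexp : b/2 - 1 - 1 = b/2 - 2 := by ring
  have h3 : (((b/2) * ((b/2-1) * s ^ (b/2-1-1)) : ℝ) : ℂ) * V a b ω s
      + (((b/2) * s ^ (b/2-1) : ℝ) : ℂ) * V1 a b ω s
      + ((((b/2) * s ^ (b/2-1) : ℝ)) : ℂ) * V1 a b ω s + ((s ^ (b/2) : ℝ) : ℂ) * V2 a b ω s
      = U2f a b ω s := by
    rw [U2f, hexp]
    push_cast
    ring
  rw [← h3]
  exact h.congr_deriv (by ring)

lemma U1_eq {s : ℝ} (hs : 0 < s) :
    U1f a b ω s = ((s ^ (b/2-1) : ℝ) : ℂ) * Gf a b ω s := by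
  have hx : s ^ (b/2) = s ^ (b/2-1) * s := by
    have he : b/2 = (b/2 - 1) + 1 := by ring
    rw [he, rpow_shift hs]
    ring_nf
  rw [U1f, Gf, hx]
  push_cast
  ring

lemma U2_conj {s : ℝ} (hs : 0 < s) :
    U2f a b ω s * (starRingEnd ℂ) (Uf a b ω s)
      = (ω^2 * (s:ℂ)^2/4 - (((b/2 - a : ℝ)):ℂ) * ω * (s:ℂ) + (((b*(b-2)/4 : ℝ)):ℂ))
        * ((phif a b ω s : ℝ) : ℂ) := by
  have hC : (b:ℂ) * (s:ℂ) * V1 a b ω s + (s:ℂ)^2 * V2 a b ω s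
      = (ω^2 * (s:ℂ)^2/4 - ((b:ℂ)/2 - (a:ℂ)) * ω * (s:ℂ)) * V a b ω s := by
    have hode := W_ode (a := a) hb hω s
    simp only [V, V1, V2]
    linear_combination (EE ω s * (s:ℂ)) * hode
  have e1 : s ^ (b/2-1) = s ^ (b/2-2) * s := by
    rw [show s ^ (b/2-2) * s = s ^ (b/2-2) * s ^ (1:ℝ) from by rw [Real.rpow_one]]
    rw [← Real.rpow_add hs]
    congr 1; ring
  have e2 : s ^ (b/2) = s ^ (b/2-2) * s * s := by
    rw [show s ^ (b/2-2) * s * s = s ^ (b/2-2) * s ^ (1:ℝ) * s ^ (1:ℝ) from by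
      rw [Real.rpow_one]]
    rw [← Real.rpow_add hs, ← Real.rpow_add hs]
    congr 1; ring
  have e3 : s ^ (b-2) = s ^ (b/2-2) * s * (s ^ (b/2-2) * s) := by
    rw [← e1, ← Real.rpow_add hs]
    congr 1; ring
  simp only [U2f, Uf, phif]
  rw [e1, e2, e3]
  push_cast [map_mul, Complex.conj_ofReal]
  rw [show ((Complex.normSq (V a b ω s) : ℝ) : ℂ)
      = V a b ω s * (starRingEnd ℂ) (V a b ω s) from (Complex.mul_conj _).symm]
  linear_combination (((s ^ (b/2-2) : ℝ) : ℂ)^2 * (s:ℂ)^2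
    * ((starRingEnd ℂ) (V a b ω s))) * hC

lemma gg_deriv {s : ℝ} (hs : 0 < s) :
    HasDerivAt (ggf a b ω)
      (U2f a b ω s * (starRingEnd ℂ) (Uf a b ω s) + ((chif a b ω s : ℝ) : ℂ)) s := by
  have hstar : HasDerivAt (fun t => (starRingEnd ℂ) (Uf a b ω t))
      ((starRingEnd ℂ) (U1f a b ω s)) s := (hasDerivAt_U (a := a) hb hω hs).star
  have hmul := (hasDerivAt_U1 (a := a) hb hω hs).mul hstar
  have hXeq : U1f a b ω s * (starRingEnd ℂ) (U1f a b ω s) = ((chif a b ω s : ℝ) : ℂ) := by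
    rw [U1_eq (a := a) hb hω hs]
    simp only [chif]
    have e : s ^ (b-2) = s ^ (b/2-1) * s ^ (b/2-1) := by
      rw [← Real.rpow_add hs]; congr 1; ring
    rw [e]
    push_cast [map_mul, Complex.conj_ofReal]
    rw [show ((Complex.normSq (Gf a b ω s) : ℝ) : ℂ)
        = Gf a b ω s * (starRingEnd ℂ) (Gf a b ω s) from (Complex.mul_conj _).symm]
    ring
  rw [hXeq] at hmul
  apply hmul.congr_of_eventuallyEq
  filter_upwards [Ioi_mem_nhds hs] with t ht
  rw [Pi.mul_apply]
  rw [U1_eq (a := a) hb hω ht]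
  simp only [ggf, Uf]
  have e : t ^ (b-1) = t ^ (b/2-1) * t ^ (b/2) := by
    rw [← Real.rpow_add ht]; congr 1; ring
  rw [e]
  push_cast [map_mul, Complex.conj_ofReal]
  ring

end Layer2

lemma intervalIntegral_ofReal' {f : ℝ → ℝ} {u v : ℝ}
    (hf : IntervalIntegrable f MeasureTheory.volume u v) :
    (∫ x in u..v, ((f x : ℝ) : ℂ)) = ((∫ x in u..v, f x : ℝ) : ℂ) := by
  have h := Complex.ofRealCLM.intervalIntegral_comp_comm hf
  simpa [Complex.ofRealCLM_apply] using h

end KummerAux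

open KummerAux in
theorem kummer_nonreal_roots_modulus (a b : ℝ) (hb : 2 ≤ b) (z : ℂ) (hz : z.im ≠ 0)
    (h : kummerPhi a b z = 0) : Real.sqrt (b * (b - 2)) < ‖z‖ := by
  classical
  have hz0 : z ≠ 0 := by
    intro h0; rw [h0] at hz; simp at hz
  set ρ : ℝ := ‖z‖ with hρdef
  have hρ : 0 < ρ := by
    rw [hρdef]; exact norm_pos_iff.mpr hz0
  have hρC : ((ρ:ℝ):ℂ) ≠ 0 := Complex.ofReal_ne_zero.mpr hρ.ne'
  set ω : ℂ := ((ρ:ℝ):ℂ)⁻¹ * z with hωdef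
  have hzω : ((ρ:ℝ):ℂ) * ω = z := by
    rw [hωdef]; field_simp
  have hω : ‖ω‖ = 1 := by
    rw [hωdef, norm_mul, norm_inv, Complex.norm_real, Real.norm_eq_abs, abs_of_pos hρ, ← hρdef]
    field_simp
  have hωim : ω.im ≠ 0 := by
    intro h0
    apply hz
    rw [← hzω]
    simp [Complex.mul_im, h0]
  have hsq : ω.re^2 + ω.im^2 = 1 := by
    have h1 : Complex.normSq ω = 1 := by
      rw [Complex.normSq_eq_norm_sq, hω]; norm_num
    rw [Complex.normSq_apply] at h1
    nlinarith [h1]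
  have hW0ρ : W0 a b ω ρ = 0 := by
    rw [← kummerPhi_eq (a := a) (b := b) (ω := ω) ρ, hzω]; exact h
  have hb2 : (0:ℝ) ≤ b - 2 := by linarith
  have hb1 : (0:ℝ) ≤ b - 1 := by linarith
  -- continuity
  have hVc : Continuous (V a b ω) := V_cont hb hω
  have hGc : Continuous (Gf a b ω) := G_cont hb hω
  have hnsV : Continuous fun s : ℝ => Complex.normSq (V a b ω s) :=
    Complex.continuous_normSq.comp hVc
  have hnsG : Continuous fun s : ℝ => Complex.normSq (Gf a b ω s) :=
    Complex.continuous_normSq.comp hGc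
  have hφc : ContinuousOn (fun s => phif a b ω s) (Set.Icc 0 ρ) := by
    simp only [phif]
    exact (rpow_contOn _ hb2 0 ρ).mul hnsV.continuousOn
  have hχc : ContinuousOn (fun s => chif a b ω s) (Set.Icc 0 ρ) := by
    simp only [chif]
    exact (rpow_contOn _ hb2 0 ρ).mul hnsG.continuousOn
  have hφ1c : ContinuousOn (fun s : ℝ => s * phif a b ω s) (Set.Icc 0 ρ) :=
    continuousOn_id.mul hφc
  have hφ2c : ContinuousOn (fun s : ℝ => s^2 * phif a b ω s) (Set.Icc 0 ρ) :=
    ((continuous_pow 2).continuousOn).mul hφc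
  have hIcc : Set.uIcc (0:ℝ) ρ = Set.Icc 0 ρ := Set.uIcc_of_le hρ.le
  have hφint : IntervalIntegrable (fun s => phif a b ω s) MeasureTheory.volume 0 ρ := by
    apply ContinuousOn.intervalIntegrable; rwa [hIcc]
  have hχint : IntervalIntegrable (fun s => chif a b ω s) MeasureTheory.volume 0 ρ := by
    apply ContinuousOn.intervalIntegrable; rwa [hIcc]
  have hφ1int : IntervalIntegrable (fun s : ℝ => s * phif a b ω s) MeasureTheory.volume 0 ρ := by
    apply ContinuousOn.intervalIntegrable; rwa [hIcc]
  have hφ2int : IntervalIntegrable (fun s : ℝ => s^2 * phif a b ω s) MeasureTheory.volume 0 ρ := by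
    apply ContinuousOn.intervalIntegrable; rwa [hIcc]
  -- FTC endpoints
  have hggρ : ggf a b ω ρ = 0 := by
    have hVρ : V a b ω ρ = 0 := by simp only [V, hW0ρ, mul_zero]
    simp only [ggf, hVρ, map_zero, mul_zero]
  have hgg0 : ggf a b ω 0 = 0 := by
    simp only [ggf]
    rw [Real.zero_rpow (by intro hc; rw [sub_eq_zero] at hc; linarith : b - 1 ≠ 0)]
    simp
  have hggcont : ContinuousOn (ggf a b ω) (Set.Icc 0 ρ) := by
    have h1 : ContinuousOn (fun s : ℝ =>
        ((s ^ (b-1) : ℝ) : ℂ) * (Gf a b ω s * (starRingEnd ℂ) (V a b ω s)))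
        (Set.Icc 0 ρ) := by
      apply ContinuousOn.mul
      · exact Complex.continuous_ofReal.comp_continuousOn (rpow_contOn _ hb1 0 ρ)
      · exact (hGc.mul (Complex.continuous_conj.comp hVc)).continuousOn
    exact h1
  -- the combined integrand
  have hpoly : Continuous (fun s : ℝ =>
      ω^2 * (s:ℂ)^2/4 - (((b/2 - a : ℝ)):ℂ) * ω * (s:ℂ) + (((b*(b-2)/4 : ℝ)):ℂ)) := by
    apply Continuous.add
    · apply Continuous.sub
      · exact (Continuous.mul continuous_const ((Complex.continuous_ofReal).pow 2)).div_const 4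
      · exact continuous_const.mul Complex.continuous_ofReal
    · exact continuous_const
  have hhcont : ContinuousOn (fun s : ℝ =>
      (ω^2 * (s:ℂ)^2/4 - (((b/2 - a : ℝ)):ℂ) * ω * (s:ℂ) + (((b*(b-2)/4 : ℝ)):ℂ))
        * ((phif a b ω s : ℝ):ℂ) + ((chif a b ω s : ℝ):ℂ)) (Set.Icc 0 ρ) := by
    apply ContinuousOn.add
    · exact hpoly.continuousOn.mul (Complex.continuous_ofReal.comp_continuousOn hφc)
    · exact Complex.continuous_ofReal.comp_continuousOn hχc
  have hhint : IntervalIntegrable (fun s : ℝ =>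
      (ω^2 * (s:ℂ)^2/4 - (((b/2 - a : ℝ)):ℂ) * ω * (s:ℂ) + (((b*(b-2)/4 : ℝ)):ℂ))
        * ((phif a b ω s : ℝ):ℂ) + ((chif a b ω s : ℝ):ℂ)) MeasureTheory.volume 0 ρ := by
    apply ContinuousOn.intervalIntegrable; rwa [hIcc]
  have hFTC : (∫ s in (0:ℝ)..ρ,
      ((ω^2 * (s:ℂ)^2/4 - (((b/2 - a : ℝ)):ℂ) * ω * (s:ℂ) + (((b*(b-2)/4 : ℝ)):ℂ))
        * ((phif a b ω s : ℝ):ℂ) + ((chif a b ω s : ℝ):ℂ))) = 0 := by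
    rw [intervalIntegral.integral_eq_sub_of_hasDerivAt_of_le hρ.le hggcont ?_ hhint,
      hggρ, hgg0, sub_zero]
    intro s hs
    have h1 := gg_deriv (a := a) hb hω hs.1
    rw [U2_conj (a := a) hb hω hs.1] at h1
    exact h1
  -- split
  set A0 : ℝ := ∫ s in (0:ℝ)..ρ, phif a b ω s with hA0def
  set A1 : ℝ := ∫ s in (0:ℝ)..ρ, s * phif a b ω s with hA1def
  set A2 : ℝ := ∫ s in (0:ℝ)..ρ, s^2 * phif a b ω s with hA2def
  set X : ℝ := ∫ s in (0:ℝ)..ρ, chif a b ω s with hXdef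
  have hI1 : IntervalIntegrable
      (fun s : ℝ => (ω^2/4) * ((s^2 * phif a b ω s : ℝ):ℂ)) MeasureTheory.volume 0 ρ := by
    apply ContinuousOn.intervalIntegrable
    rw [hIcc]
    exact continuous_const.continuousOn.mul (Complex.continuous_ofReal.comp_continuousOn hφ2c)
  have hI2 : IntervalIntegrable
      (fun s : ℝ => ((((b/2 - a : ℝ)):ℂ)*ω) * ((s * phif a b ω s : ℝ):ℂ))
      MeasureTheory.volume 0 ρ := by
    apply ContinuousOn.intervalIntegrable
    rw [hIcc]
    exact continuous_const.continuousOn.mul (Complex.continuous_ofReal.comp_continuousOn hφ1c)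
  have hI3 : IntervalIntegrable
      (fun s : ℝ => (((b*(b-2)/4 : ℝ)):ℂ) * ((phif a b ω s : ℝ):ℂ))
      MeasureTheory.volume 0 ρ := by
    apply ContinuousOn.intervalIntegrable
    rw [hIcc]
    exact continuous_const.continuousOn.mul (Complex.continuous_ofReal.comp_continuousOn hφc)
  have hI4 : IntervalIntegrable (fun s : ℝ => ((chif a b ω s : ℝ):ℂ))
      MeasureTheory.volume 0 ρ := by
    apply ContinuousOn.intervalIntegrable
    rw [hIcc]
    exact Complex.continuous_ofReal.comp_continuousOn hχc
  have hval : (∫ s in (0:ℝ)..ρ,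
      ((ω^2 * (s:ℂ)^2/4 - (((b/2 - a : ℝ)):ℂ) * ω * (s:ℂ) + (((b*(b-2)/4 : ℝ)):ℂ))
        * ((phif a b ω s : ℝ):ℂ) + ((chif a b ω s : ℝ):ℂ)))
      = (ω^2/4) * (A2:ℂ) - ((((b/2 - a : ℝ)):ℂ)*ω)*(A1:ℂ)
        + (((b*(b-2)/4 : ℝ)):ℂ)*(A0:ℂ) + (X:ℂ) := by
    have e : Set.EqOn (fun s : ℝ =>
        (ω^2 * (s:ℂ)^2/4 - (((b/2 - a : ℝ)):ℂ) * ω * (s:ℂ) + (((b*(b-2)/4 : ℝ)):ℂ))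
          * ((phif a b ω s : ℝ):ℂ) + ((chif a b ω s : ℝ):ℂ))
        (fun s : ℝ => ((ω^2/4) * ((s^2 * phif a b ω s : ℝ):ℂ)
          - ((((b/2 - a : ℝ)):ℂ)*ω) * ((s * phif a b ω s : ℝ):ℂ)
          + (((b*(b-2)/4 : ℝ)):ℂ) * ((phif a b ω s : ℝ):ℂ)) + ((chif a b ω s : ℝ):ℂ))
        (Set.uIcc 0 ρ) := by
      intro s _
      push_cast
      ring
    rw [intervalIntegral.integral_congr e]
    rw [intervalIntegral.integral_add ((hI1.sub hI2).add hI3) hI4,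
      intervalIntegral.integral_add (hI1.sub hI2) hI3,
      intervalIntegral.integral_sub hI1 hI2]
    rw [intervalIntegral.integral_const_mul, intervalIntegral.integral_const_mul,
      intervalIntegral.integral_const_mul]
    rw [intervalIntegral_ofReal' hφ2int, intervalIntegral_ofReal' hφ1int,
      intervalIntegral_ofReal' hφint, intervalIntegral_ofReal' hχint]
  rw [hval] at hFTC
  -- multiply by 4 and take real and imaginary parts
  have hsplit4 : ω*ω*(A2:ℂ) - 4*((((b/2 - a : ℝ)):ℂ)*ω)*(A1:ℂ)
      + 4*((((b*(b-2)/4 : ℝ)):ℂ))*(A0:ℂ) + 4*(X:ℂ) = 0 := by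
    linear_combination 4 * hFTC
  have him := congrArg Complex.im hsplit4
  have hre := congrArg Complex.re hsplit4
  simp only [Complex.add_im, Complex.sub_im, Complex.mul_im, Complex.mul_re,
    Complex.ofReal_re, Complex.ofReal_im, Complex.zero_im, Complex.re_ofNat,
    Complex.im_ofNat, mul_zero, zero_mul, sub_zero, add_zero, zero_add] at him
  simp only [Complex.add_re, Complex.sub_re, Complex.mul_im, Complex.mul_re,
    Complex.ofReal_re, Complex.ofReal_im, Complex.zero_re, Complex.re_ofNat,
    Complex.im_ofNat, mul_zero, zero_mul, sub_zero, add_zero, zero_add] at hre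
  have hkA : 2*(b/2-a)*A1 = ω.re*A2 := by
    have h2 : ω.im * (2*(b/2-a)*A1 - ω.re*A2) = 0 := by linear_combination (-(1:ℝ)/2) * him
    have h3 := (mul_eq_zero.mp h2).resolve_left hωim
    linarith [h3]
  have hmain : b*(b-2)*A0 + 4*X = A2 := by
    linear_combination hre + (2*ω.re)*hkA + A2*hsq
  -- positivity of X
  have hG0 : Gf a b ω 0 = (b:ℂ)/2 := by
    simp [Gf, V, EE, W0_zero (a := a) (b := b) (ω := ω)]
  have hGpos : 0 < Complex.normSq (Gf a b ω 0) := by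
    rw [hG0]
    apply Complex.normSq_pos.mpr
    have hbne : (b:ℂ) ≠ 0 := Complex.ofReal_ne_zero.mpr (by linarith)
    exact div_ne_zero hbne two_ne_zero
  have hpre : (fun s : ℝ => Complex.normSq (Gf a b ω s)) ⁻¹' (Set.Ioi 0) ∈ nhds (0:ℝ) :=
    hnsG.continuousAt.preimage_mem_nhds (Ioi_mem_nhds hGpos)
  obtain ⟨ε, hε, hball⟩ := Metric.mem_nhds_iff.mp hpre
  set δ : ℝ := min (ε/2) ρ with hδdef
  have hδ0 : 0 < δ := lt_min (by linarith) hρ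
  have hδρ : δ ≤ ρ := min_le_right _ _
  have hχposon : ∀ s ∈ Set.Ioo (0:ℝ) δ, 0 < chif a b ω s := by
    intro s hs
    have hsε : s ∈ Metric.ball (0:ℝ) ε := by
      rw [Metric.mem_ball, Real.dist_eq, sub_zero, abs_of_pos hs.1]
      have := min_le_left (ε/2) ρ
      have := hs.2
      simp only [hδdef] at this
      linarith [min_le_left (ε/2) ρ]
    have hb2' := hball hsε
    simp only [Set.mem_preimage, Set.mem_Ioi] at hb2'
    simp only [chif]
    exact mul_pos (Real.rpow_pos_of_pos hs.1 _) hb2'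
  have hχint2 : IntervalIntegrable (fun s => chif a b ω s) MeasureTheory.volume 0 δ := by
    apply ContinuousOn.intervalIntegrable
    apply hχc.mono
    rw [Set.uIcc_of_le hδ0.le]
    exact Set.Icc_subset_Icc le_rfl hδρ
  have hχint3 : IntervalIntegrable (fun s => chif a b ω s) MeasureTheory.volume δ ρ := by
    apply ContinuousOn.intervalIntegrable
    apply hχc.mono
    rw [Set.uIcc_of_le hδρ]
    exact Set.Icc_subset_Icc hδ0.le le_rfl
  have h1pos : 0 < ∫ s in (0:ℝ)..δ, chif a b ω s :=
    intervalIntegral.intervalIntegral_pos_of_pos_on hχint2 hχposon hδ0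
  have h2nn : 0 ≤ ∫ s in δ..ρ, chif a b ω s := by
    apply intervalIntegral.integral_nonneg hδρ
    intro u hu
    simp only [chif]
    exact mul_nonneg (Real.rpow_nonneg (le_trans hδ0.le hu.1) _) (Complex.normSq_nonneg _)
  have hXpos : 0 < X := by
    rw [hXdef, ← intervalIntegral.integral_add_adjacent_intervals hχint2 hχint3]
    linarith
  -- inequalities
  have hφnn : ∀ s ∈ Set.Icc (0:ℝ) ρ, 0 ≤ phif a b ω s := by
    intro s hs
    simp only [phif]
    exact mul_nonneg (Real.rpow_nonneg hs.1 _) (Complex.normSq_nonneg _)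
  have hA0nn : 0 ≤ A0 := by
    rw [hA0def]
    exact intervalIntegral.integral_nonneg hρ.le hφnn
  have hA2le : A2 ≤ ρ^2 * A0 := by
    have hmono : (∫ s in (0:ℝ)..ρ, s^2 * phif a b ω s)
        ≤ ∫ s in (0:ℝ)..ρ, ρ^2 * phif a b ω s := by
      apply intervalIntegral.integral_mono_on hρ.le hφ2int (hφint.const_mul (ρ^2))
      intro x hx
      apply mul_le_mul_of_nonneg_right _ (hφnn x hx)
      exact pow_le_pow_left₀ hx.1 hx.2 2
    rw [intervalIntegral.integral_const_mul] at hmono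
    rw [hA2def, hA0def]
    exact hmono
  have hfin : b*(b-2) < ρ^2 := by nlinarith [hXpos, hA2le, hmain, hA0nn]
  exact (Real.sqrt_lt' hρ).mpr hfin
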